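/- arXiv:1201.5725 — 4 statements merged into one kernel-verified Lean document; each statement's English description precedes it below -/
import Mathlib

section
/- Let Λ ≥ 0 and R > 0. Suppose a, b : (0,R] → ℝ are C², p is C¹, ρ and p⊥ are continuous, q is C¹ on (0,R], and the static spherically symmetric Einstein–Maxwell equations (ee1)–(ee3) hold on (0,R], with ρ ≥ 0, p ≥ 0 and p + 2p⊥ ≤ ρ on (0,R]. Assume the regular-centre conditions: e^{-b(r)} = 1 - 2m(r)/r - f(r)/r - Λr²/3 for all r ∈ (0,R], lim_{r→0⁺} q(r)²/r² = 0, lim_{r→0⁺} r²p(r) = 0, and lim_{r→0⁺} m(r)/r = 0. If in addition q(r)²/r² + Λr² ≤ 1 for all r ∈ (0,R], then for all r ∈ (0,R]: m_g(r)/r ≤ 2/9 + q(r)²/(3r²) - Λr²/3 + (2/9)·√(1 + 3q(r)²/r² + 3Λr²). -/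
open Real Set MeasureTheory

noncomputable section

/-- The mass within area radius `r`: `m(r) = ∫₀ʳ 4πρ(η)η² dη`. -/
def mFun (ρ : ℝ → ℝ) (r : ℝ) : ℝ := ∫ η in Ioc (0 : ℝ) r, 4 * π * ρ η * η ^ 2

/-- The function `f(r) = ∫₀ʳ q(η)²/η² dη`. -/
def fFun (q : ℝ → ℝ) (r : ℝ) : ℝ := ∫ η in Ioc (0 : ℝ) r, q η ^ 2 / η ^ 2

/-- The gravitational mass `m_g(r) = m(r) + q(r)²/(2r) + f(r)/2`. -/
def mg (ρ q : ℝ → ℝ) (r : ℝ) : ℝ := mFun ρ r + q r ^ 2 / (2 * r) + fFun q r / 2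

private lemma ptwise (c u v T X A1 B1 A2 : ℝ) (hc0 : 0 < c) (hc1 : c ≤ 1)
    (hu : 0 ≤ u) (hX0 : 0 ≤ X) (hX1 : X ≤ 1)
    (e1 : B1 * c ^ 2 = v + X - 1 + c ^ 2)
    (e2 : A1 * c ^ 2 = u - X + 1 - c ^ 2)
    (e3 : c ^ 2 * (A2 + (A1 / 2 + 1) * (A1 - B1)) = 2 * T - 2 * X)
    (ec : u + 2 * T ≤ v) :
    c * (A1 + 2 + (A1 - B1) * (A1 / 2 + 2) / 2 + A2 / 2) ≤ 2 + A1 := by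
  have hfin : 2 * c ^ 4 * ((2 + A1) - c * (A1 + 2 + (A1 - B1) * (A1 / 2 + 2) / 2 + A2 / 2))
      = c ^ 2 * (2 * ((1 - c) ^ 2 + u * (1 - c) + X * (3 * c - 1)) + c * (v - 2 * T - u)) := by
    linear_combination (2 * c ^ 2 - 3 * c ^ 3) * e2 + c ^ 3 * e1 - c ^ 3 * e3
  have hbr : 0 ≤ 2 * ((1 - c) ^ 2 + u * (1 - c) + X * (3 * c - 1)) + c * (v - 2 * T - u) := by
    nlinarith [mul_nonneg (sub_nonneg.2 hX1) (sq_nonneg (1 - c)),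
      mul_nonneg hX0 (mul_nonneg hc0.le (by linarith : (0:ℝ) ≤ c + 1)),
      mul_nonneg hu (by linarith : (0:ℝ) ≤ 1 - c),
      mul_nonneg hc0.le (by linarith : (0:ℝ) ≤ v - 2 * T - u)]
  have h4 : 0 < c ^ 4 := by positivity
  nlinarith [hfin, mul_nonneg (sq_nonneg c) hbr, h4]

set_option maxHeartbeats 1000000 in
/-- Theorem 1: the compactness bound for charged objects with positive
cosmological constant. -/
theorem compactness_bound_charged_cosmological
    (Λ R : ℝ) (hΛ : 0 ≤ Λ) (hR : 0 < R)
    (a a' a'' b b' b'' p p' ρ pT q q' : ℝ → ℝ)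
    -- a and b are C² on (0, R]
    (ha : ∀ r ∈ Ioc 0 R, HasDerivAt a (a' r) r)
    (ha' : ∀ r ∈ Ioc 0 R, HasDerivAt a' (a'' r) r)
    (ha'' : ContinuousOn a'' (Ioc 0 R))
    (hb : ∀ r ∈ Ioc 0 R, HasDerivAt b (b' r) r)
    (hb' : ∀ r ∈ Ioc 0 R, HasDerivAt b' (b'' r) r)
    (hb'' : ContinuousOn b'' (Ioc 0 R))
    -- p is C¹, ρ and p⊥ are continuous, q is C¹ on (0, R]
    (hp : ∀ r ∈ Ioc 0 R, HasDerivAt p (p' r) r)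
    (hp' : ContinuousOn p' (Ioc 0 R))
    (hρc : ContinuousOn ρ (Ioc 0 R))
    (hpTc : ContinuousOn pT (Ioc 0 R))
    (hq : ∀ r ∈ Ioc 0 R, HasDerivAt q (q' r) r)
    (hq' : ContinuousOn q' (Ioc 0 R))
    -- integrability defining m and f
    (hmInt : IntegrableOn (fun η => 4 * π * ρ η * η ^ 2) (Ioc 0 R))
    (hfInt : IntegrableOn (fun η => q η ^ 2 / η ^ 2) (Ioc 0 R))
    -- the Einstein–Maxwell equations (ee1)–(ee3) on (0, R]
    (ee1 : ∀ r ∈ Ioc 0 R, 8 * π * ρ r + q r ^ 2 / r ^ 4 =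
      (1 / r ^ 2) * (1 - Real.exp (-(b r)) + r * b' r * Real.exp (-(b r))) - Λ)
    (ee2 : ∀ r ∈ Ioc 0 R, 8 * π * p r - q r ^ 2 / r ^ 4 =
      Real.exp (-(b r)) / r ^ 2 + a' r * Real.exp (-(b r)) / r - 1 / r ^ 2 + Λ)
    (ee3 : ∀ r ∈ Ioc 0 R, 8 * π * pT r - q r ^ 2 / r ^ 4 =
      (Real.exp (-(b r)) / 2) *
        (a'' r + (a' r / 2 + 1 / r) * (a' r - b' r)) + Λ)
    -- sign and energy conditions
    (hρ : ∀ r ∈ Ioc 0 R, 0 ≤ ρ r)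
    (hppos : ∀ r ∈ Ioc 0 R, 0 ≤ p r)
    (hdom : ∀ r ∈ Ioc 0 R, p r + 2 * pT r ≤ ρ r)
    -- regular-centre conditions
    (hmatch : ∀ r ∈ Ioc 0 R,
      Real.exp (-(b r)) = 1 - 2 * mFun ρ r / r - fFun q r / r - Λ * r ^ 2 / 3)
    (hq0 : Filter.Tendsto (fun r => q r ^ 2 / r ^ 2)
      (nhdsWithin 0 (Ioi 0)) (nhds 0))
    (hp0 : Filter.Tendsto (fun r => r ^ 2 * p r)
      (nhdsWithin 0 (Ioi 0)) (nhds 0))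
    (hm0 : Filter.Tendsto (fun r => mFun ρ r / r)
      (nhdsWithin 0 (Ioi 0)) (nhds 0))
    -- main condition
    (hcond : ∀ r ∈ Ioc 0 R, q r ^ 2 / r ^ 2 + Λ * r ^ 2 ≤ 1) :
    ∀ r ∈ Ioc 0 R,
      mg ρ q r / r ≤ 2 / 9 + q r ^ 2 / (3 * r ^ 2) - Λ * r ^ 2 / 3
        + (2 / 9) * Real.sqrt (1 + 3 * q r ^ 2 / r ^ 2 + 3 * Λ * r ^ 2) := by
  have hpi : (0:ℝ) < π := Real.pi_pos
  -- basic exponential identities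
  have hsq : ∀ s : ℝ, Real.exp (-(b s)) = Real.exp (-(b s) / 2) ^ 2 := by
    intro s; rw [sq, ← Real.exp_add]; ring_nf
  have hsplit : ∀ s : ℝ,
      Real.exp ((a s - b s) / 2) = Real.exp (a s / 2) * Real.exp (-(b s) / 2) := by
    intro s; rw [← Real.exp_add]; ring_nf
  have hcpos : ∀ s : ℝ, 0 < Real.exp (-(b s) / 2) := fun s => Real.exp_pos _
  -- nonnegativity of m and f
  have hmnn : ∀ s ∈ Ioc (0:ℝ) R, 0 ≤ mFun ρ s := by
    intro s hs
    apply setIntegral_nonneg measurableSet_Ioc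
    intro η hη
    have hρη : 0 ≤ ρ η := hρ η ⟨hη.1, hη.2.trans hs.2⟩
    positivity
  have hfnn : ∀ s : ℝ, 0 ≤ fFun q s := by
    intro s
    apply setIntegral_nonneg measurableSet_Ioc
    intro η _
    positivity
  -- c ≤ 1
  have hcle1 : ∀ s ∈ Ioc (0:ℝ) R, Real.exp (-(b s) / 2) ≤ 1 := by
    intro s hs
    have h1 : Real.exp (-(b s)) ≤ 1 := by
      rw [hmatch s hs]
      have h2 := hmnn s hs
      have h3 := hfnn s
      have hs0 : 0 < s := hs.1
      have t1 : 0 ≤ 2 * mFun ρ s / s := by positivity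
      have t2 : 0 ≤ fFun q s / s := by positivity
      have t3 : 0 ≤ Λ * s ^ 2 / 3 := by positivity
      linarith
    rw [hsq s] at h1
    nlinarith [hcpos s]
  -- the three field equations in polynomial form
  have he1 : ∀ s ∈ Ioc (0:ℝ) R, (s * b' s) * Real.exp (-(b s) / 2) ^ 2
      = 8 * π * ρ s * s ^ 2 + (q s ^ 2 / s ^ 2 + Λ * s ^ 2) - 1 + Real.exp (-(b s) / 2) ^ 2 := by
    intro s hs
    have h := ee1 s hs
    rw [hsq s] at h
    have hs0 : s ≠ 0 := ne_of_gt hs.1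
    linear_combination (norm := (field_simp; ring)) (-(s ^ 2)) * h
  have he2 : ∀ s ∈ Ioc (0:ℝ) R, (s * a' s) * Real.exp (-(b s) / 2) ^ 2
      = 8 * π * p s * s ^ 2 - (q s ^ 2 / s ^ 2 + Λ * s ^ 2) + 1 - Real.exp (-(b s) / 2) ^ 2 := by
    intro s hs
    have h := ee2 s hs
    rw [hsq s] at h
    have hs0 : s ≠ 0 := ne_of_gt hs.1
    linear_combination (norm := (field_simp; ring)) (-(s ^ 2)) * h
  have he3 : ∀ s ∈ Ioc (0:ℝ) R, Real.exp (-(b s) / 2) ^ 2 *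
      ((s ^ 2 * a'' s) + ((s * a' s) / 2 + 1) * ((s * a' s) - (s * b' s)))
      = 2 * (8 * π * pT s * s ^ 2) - 2 * (q s ^ 2 / s ^ 2 + Λ * s ^ 2) := by
    intro s hs
    have h := ee3 s hs
    rw [hsq s] at h
    have hs0 : s ≠ 0 := ne_of_gt hs.1
    linear_combination (norm := (field_simp; ring)) (-(2 * s ^ 2)) * h
  -- auxiliary nonnegativity facts
  have hu8 : ∀ s ∈ Ioc (0:ℝ) R, 0 ≤ 8 * π * p s * s ^ 2 := by
    intro s hs
    have := hppos s hs
    positivity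
  have hX0 : ∀ s : ℝ, 0 ≤ q s ^ 2 / s ^ 2 + Λ * s ^ 2 := by
    intro s
    have t1 : 0 ≤ q s ^ 2 / s ^ 2 := by positivity
    have t2 : 0 ≤ Λ * s ^ 2 := mul_nonneg hΛ (sq_nonneg s)
    linarith
  -- the derivative of the key function g
  have hgd : ∀ s ∈ Ioc (0:ℝ) R, HasDerivAt
      (fun t => t * Real.exp ((a t - b t) / 2) * (t * a' t / 2 + 2) - 2 * t * Real.exp (a t / 2))
      ((1 * Real.exp ((a s - b s) / 2)
          + s * (Real.exp ((a s - b s) / 2) * ((a' s - b' s) / 2))) * (s * a' s / 2 + 2)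
        + s * Real.exp ((a s - b s) / 2) * ((1 * a' s + s * a'' s) / 2)
        - ((2 * 1) * Real.exp (a s / 2) + 2 * s * (Real.exp (a s / 2) * (a' s / 2)))) s := by
    intro s hs
    have h1 : HasDerivAt (fun t => (a t - b t) / 2) ((a' s - b' s) / 2) s :=
      ((ha s hs).sub (hb s hs)).div_const 2
    have h2 := h1.exp
    have h3 : HasDerivAt (fun t => t * Real.exp ((a t - b t) / 2))
        (1 * Real.exp ((a s - b s) / 2)
          + s * (Real.exp ((a s - b s) / 2) * ((a' s - b' s) / 2))) s :=
      (hasDerivAt_id' s).mul h2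
    have h4 : HasDerivAt (fun t => t * a' t / 2 + 2) ((1 * a' s + s * a'' s) / 2) s :=
      (((hasDerivAt_id' s).mul (ha' s hs)).div_const 2).add_const 2
    have h5 : HasDerivAt (fun t => Real.exp (a t / 2)) (Real.exp (a s / 2) * (a' s / 2)) s :=
      ((ha s hs).div_const 2).exp
    have h6 : HasDerivAt (fun t => 2 * t * Real.exp (a t / 2))
        ((2 * 1) * Real.exp (a s / 2) + 2 * s * (Real.exp (a s / 2) * (a' s / 2))) s :=
      ((hasDerivAt_id' s).const_mul 2).mul h5
    exact (h3.mul h4).sub h6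
  -- derivative is nonpositive
  have hDnonpos : ∀ s ∈ Ioc (0:ℝ) R,
      (1 * Real.exp ((a s - b s) / 2)
          + s * (Real.exp ((a s - b s) / 2) * ((a' s - b' s) / 2))) * (s * a' s / 2 + 2)
        + s * Real.exp ((a s - b s) / 2) * ((1 * a' s + s * a'' s) / 2)
        - ((2 * 1) * Real.exp (a s / 2) + 2 * s * (Real.exp (a s / 2) * (a' s / 2))) ≤ 0 := by
    intro s hs
    have h8pos : (0:ℝ) < 8 * π * s ^ 2 := by
      have := hs.1
      positivity
    have hec : 8 * π * p s * s ^ 2 + 2 * (8 * π * pT s * s ^ 2) ≤ 8 * π * ρ s * s ^ 2 := by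
      nlinarith [mul_le_mul_of_nonneg_left (hdom s hs) h8pos.le]
    have hkey := ptwise (Real.exp (-(b s) / 2)) (8 * π * p s * s ^ 2) (8 * π * ρ s * s ^ 2)
      (8 * π * pT s * s ^ 2) (q s ^ 2 / s ^ 2 + Λ * s ^ 2)
      (s * a' s) (s * b' s) (s ^ 2 * a'' s)
      (hcpos s) (hcle1 s hs) (hu8 s hs) (hX0 s) (hcond s hs)
      (he1 s hs) (he2 s hs) (he3 s hs) hec
    rw [hsplit s]
    have hId : (1 * (Real.exp (a s / 2) * Real.exp (-(b s) / 2))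
          + s * ((Real.exp (a s / 2) * Real.exp (-(b s) / 2)) * ((a' s - b' s) / 2))) * (s * a' s / 2 + 2)
        + s * (Real.exp (a s / 2) * Real.exp (-(b s) / 2)) * ((1 * a' s + s * a'' s) / 2)
        - ((2 * 1) * Real.exp (a s / 2) + 2 * s * (Real.exp (a s / 2) * (a' s / 2)))
        = Real.exp (a s / 2) * ((Real.exp (-(b s) / 2)) *
            ((s * a' s) + 2 + ((s * a' s) - (s * b' s)) * ((s * a' s) / 2 + 2) / 2 + (s ^ 2 * a'' s) / 2)
          - (2 + (s * a' s))) := by ring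
    rw [hId]
    exact mul_nonpos_of_nonneg_of_nonpos (Real.exp_pos _).le (by linarith)
  -- g is antitone on (0, R]
  have hanti : AntitoneOn
      (fun t => t * Real.exp ((a t - b t) / 2) * (t * a' t / 2 + 2) - 2 * t * Real.exp (a t / 2))
      (Ioc 0 R) := by
    apply antitoneOn_of_deriv_nonpos (convex_Ioc 0 R)
    · intro s hs
      exact ((hgd s hs).continuousAt).continuousWithinAt
    · intro s hs
      rw [interior_Ioc] at hs
      exact ((hgd s (Ioo_subset_Ioc_self hs)).differentiableAt).differentiableWithinAt
    · intro s hs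
      rw [interior_Ioc] at hs
      rw [(hgd s (Ioo_subset_Ioc_self hs)).deriv]
      exact hDnonpos s (Ioo_subset_Ioc_self hs)
  -- f(r)/r tends to 0
  have hfr0 : Filter.Tendsto (fun s => fFun q s / s) (nhdsWithin 0 (Ioi 0)) (nhds 0) := by
    rw [Metric.tendsto_nhdsWithin_nhds]
    intro ε hε
    obtain ⟨δ, hδ, hδ'⟩ := Metric.tendsto_nhdsWithin_nhds.1 hq0 (ε/2) (by linarith)
    refine ⟨min δ R, lt_min hδ hR, ?_⟩
    intro s hsIoi hdist
    have hs0 : (0:ℝ) < s := hsIoi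
    rw [Real.dist_eq, sub_zero, abs_of_pos hs0] at hdist
    have hsR : s ≤ R := le_of_lt (lt_of_lt_of_le hdist (min_le_right _ _))
    have hsδ : s < δ := lt_of_lt_of_le hdist (min_le_left _ _)
    have hintle : (∫ η in Ioc (0:ℝ) s, q η ^ 2 / η ^ 2) ≤ ∫ _η in Ioc (0:ℝ) s, (ε/2) := by
      apply setIntegral_mono_on (hfInt.mono_set (Ioc_subset_Ioc_right hsR))
        (integrableOn_const measure_Ioc_lt_top.ne) measurableSet_Ioc
      intro η hη
      have h1 := hδ' (mem_Ioi.2 hη.1)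
        (by rw [Real.dist_eq, sub_zero, abs_of_pos hη.1]; exact lt_of_le_of_lt hη.2 hsδ)
      rw [Real.dist_eq, sub_zero] at h1
      calc q η ^ 2 / η ^ 2 ≤ |q η ^ 2 / η ^ 2| := le_abs_self _
        _ ≤ ε/2 := le_of_lt h1
    have hconst : (∫ _η in Ioc (0:ℝ) s, (ε/2)) = s * (ε/2) := by
      rw [setIntegral_const, measureReal_def, Real.volume_Ioc, smul_eq_mul, ENNReal.toReal_ofReal (by linarith)]
      ring
    rw [Real.dist_eq, sub_zero, abs_of_nonneg (div_nonneg (hfnn s) hs0.le)]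
    rw [div_lt_iff₀ hs0]
    calc fFun q s ≤ s * (ε/2) := hconst ▸ hintle
      _ < ε * s := by nlinarith
  have hIocMem : Ioc (0:ℝ) R ∈ nhdsWithin (0:ℝ) (Ioi 0) :=
    Ioc_mem_nhdsGT_of_mem ⟨le_refl 0, hR⟩
  -- Λ s² → 0
  have hw0 : Filter.Tendsto (fun s : ℝ => Λ * s ^ 2) (nhdsWithin 0 (Ioi 0)) (nhds 0) := by
    have h : Filter.Tendsto (fun s : ℝ => Λ * s ^ 2) (nhds 0) (nhds (Λ * 0 ^ 2)) :=
      (continuous_const.mul (continuous_pow 2)).tendsto 0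
    simpa using h.mono_left nhdsWithin_le_nhds
  -- e^{-b} → 1
  have hc2tend : Filter.Tendsto (fun s => Real.exp (-(b s)))
      (nhdsWithin 0 (Ioi 0)) (nhds 1) := by
    have heq : ∀ᶠ s in nhdsWithin (0:ℝ) (Ioi 0),
        1 - 2 * mFun ρ s / s - fFun q s / s - Λ * s ^ 2 / 3 = Real.exp (-(b s)) :=
      Filter.eventually_of_mem hIocMem (fun s hs => (hmatch s hs).symm)
    apply Filter.Tendsto.congr' heq
    have t1 : Filter.Tendsto (fun s => 2 * mFun ρ s / s) (nhdsWithin 0 (Ioi 0)) (nhds 0) := by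
      have := hm0.const_mul (2:ℝ)
      simp only [mul_zero] at this
      exact this.congr (fun s => by ring)
    have t3 : Filter.Tendsto (fun s : ℝ => Λ * s ^ 2 / 3) (nhdsWithin 0 (Ioi 0)) (nhds 0) := by
      have := hw0.div_const (3:ℝ)
      simpa using this
    have := ((tendsto_const_nhds (x := (1:ℝ)).sub t1).sub hfr0).sub t3
    simpa using this
  -- c → 1
  have hctend : Filter.Tendsto (fun s => Real.exp (-(b s) / 2))
      (nhdsWithin 0 (Ioi 0)) (nhds 1) := by
    have h := (Real.continuous_sqrt.tendsto 1).comp hc2tend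
    have heq : ∀ s : ℝ, Real.sqrt (Real.exp (-(b s))) = Real.exp (-(b s) / 2) := by
      intro s; rw [hsq s, Real.sqrt_sq (hcpos s).le]
    rw [Real.sqrt_one] at h
    exact h.congr heq
  -- u → 0
  have hutend : Filter.Tendsto (fun s => 8 * π * p s * s ^ 2)
      (nhdsWithin 0 (Ioi 0)) (nhds 0) := by
    have := hp0.const_mul (8 * π)
    simp only [mul_zero] at this
    exact this.congr (fun s => by ring)
  -- X → 0
  have hXtend : Filter.Tendsto (fun s => q s ^ 2 / s ^ 2 + Λ * s ^ 2)
      (nhdsWithin 0 (Ioi 0)) (nhds 0) := by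
    have := hq0.add hw0
    simpa using this
  -- the bracket tends to 0
  have hbrtend : Filter.Tendsto
      (fun s => Real.exp (-(b s) / 2) * (s * a' s / 2 + 2) - 2)
      (nhdsWithin 0 (Ioi 0)) (nhds 0) := by
    have heq : ∀ᶠ s in nhdsWithin (0:ℝ) (Ioi 0),
        (8 * π * p s * s ^ 2 - (q s ^ 2 / s ^ 2 + Λ * s ^ 2) + 1
          + 3 * Real.exp (-(b s) / 2) ^ 2 - 4 * Real.exp (-(b s) / 2))
          / (2 * Real.exp (-(b s) / 2))
        = Real.exp (-(b s) / 2) * (s * a' s / 2 + 2) - 2 := by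
      apply Filter.eventually_of_mem hIocMem
      intro s hs
      have h := he2 s hs
      rw [div_eq_iff (ne_of_gt (by positivity : (0:ℝ) < 2 * Real.exp (-(b s) / 2)))]
      linear_combination -h
    apply Filter.Tendsto.congr' heq
    have hnum : Filter.Tendsto
        (fun s => 8 * π * p s * s ^ 2 - (q s ^ 2 / s ^ 2 + Λ * s ^ 2) + 1
          + 3 * Real.exp (-(b s) / 2) ^ 2 - 4 * Real.exp (-(b s) / 2))
        (nhdsWithin 0 (Ioi 0)) (nhds 0) := by
      have := (((hutend.sub hXtend).add_const 1).add ((hctend.pow 2).const_mul 3)).sub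
        (hctend.const_mul 4)
      norm_num at this
      exact this.congr (fun s => by ring)
    have hden : Filter.Tendsto (fun s => 2 * Real.exp (-(b s) / 2))
        (nhdsWithin 0 (Ioi 0)) (nhds 2) := by
      have := hctend.const_mul (2:ℝ)
      simpa using this
    have := hnum.div hden (by norm_num)
    simp only [zero_div] at this
    exact this
  -- s * exp(a s / 2) → 0
  have hlogmono : MonotoneOn (fun t => a t + Real.log t) (Ioc (0:ℝ) R) := by
    have hder : ∀ t ∈ Ioc (0:ℝ) R, HasDerivAt (fun t => a t + Real.log t) (a' t + t⁻¹) t :=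
      fun t ht => (ha t ht).add (Real.hasDerivAt_log (ne_of_gt ht.1))
    apply monotoneOn_of_deriv_nonneg (convex_Ioc 0 R)
    · intro t ht
      exact ((hder t ht).continuousAt).continuousWithinAt
    · intro t ht
      rw [interior_Ioc] at ht
      exact ((hder t (Ioo_subset_Ioc_self ht)).differentiableAt).differentiableWithinAt
    · intro t ht
      rw [interior_Ioc] at ht
      have ht' := Ioo_subset_Ioc_self ht
      rw [(hder t ht').deriv]
      have h2 := he2 t ht'
      have hc2 : (0:ℝ) < Real.exp (-(b t) / 2) ^ 2 := pow_pos (hcpos t) 2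
      have ht0 : (0:ℝ) < t := ht'.1
      have hta : 0 ≤ t * a' t + 1 := by
        nlinarith [hu8 t ht', hcond t ht', hX0 t]
      have heqd : a' t + t⁻¹ = (t * a' t + 1) / t := by
        field_simp
      rw [heqd]
      exact div_nonneg hta ht0.le
  have htE : Filter.Tendsto (fun s => s * Real.exp (a s / 2))
      (nhdsWithin 0 (Ioi 0)) (nhds 0) := by
    have hsqrtlog : ∀ t : ℝ, 0 < t → Real.exp (Real.log t / 2) = Real.sqrt t := by
      intro t ht
      rw [← Real.log_sqrt ht.le, Real.exp_log (Real.sqrt_pos.2 ht)]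
    have hbound : ∀ s ∈ Ioc (0:ℝ) R,
        s * Real.exp (a s / 2) ≤ (Real.exp (a R / 2) * Real.sqrt R) * Real.sqrt s := by
      intro s hs
      have h1 : a s + Real.log s ≤ a R + Real.log R :=
        hlogmono hs ⟨hR, le_refl R⟩ hs.2
      have h2 : Real.exp (a s / 2) ≤ Real.exp (a R / 2 + Real.log R / 2 - Real.log s / 2) := by
        apply Real.exp_le_exp.2
        linarith
      have h3 : Real.exp (a R / 2 + Real.log R / 2 - Real.log s / 2)
          = Real.exp (a R / 2) * Real.sqrt R / Real.sqrt s := by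
        rw [Real.exp_sub, Real.exp_add, hsqrtlog R hR, hsqrtlog s hs.1]
      rw [h3] at h2
      have h4 : s * Real.exp (a s / 2) ≤ s * (Real.exp (a R / 2) * Real.sqrt R / Real.sqrt s) :=
        mul_le_mul_of_nonneg_left h2 hs.1.le
      have h5 : s * (Real.exp (a R / 2) * Real.sqrt R / Real.sqrt s)
          = (Real.exp (a R / 2) * Real.sqrt R) * (s / Real.sqrt s) := by ring
      rw [h5, Real.div_sqrt] at h4
      exact h4
    have hlim : Filter.Tendsto (fun s : ℝ => (Real.exp (a R / 2) * Real.sqrt R) * Real.sqrt s)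
        (nhdsWithin 0 (Ioi 0)) (nhds 0) := by
      have h : Filter.Tendsto (fun s : ℝ => (Real.exp (a R / 2) * Real.sqrt R) * Real.sqrt s)
          (nhds 0) (nhds ((Real.exp (a R / 2) * Real.sqrt R) * Real.sqrt 0)) :=
        (continuous_const.mul Real.continuous_sqrt).tendsto 0
      simpa using h.mono_left nhdsWithin_le_nhds
    apply squeeze_zero'
      (Filter.eventually_of_mem hIocMem (fun s hs => mul_nonneg hs.1.le (Real.exp_pos _).le))
      (Filter.eventually_of_mem hIocMem hbound) hlim
  -- g tends to 0
  have hgtend : Filter.Tendsto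
      (fun t => t * Real.exp ((a t - b t) / 2) * (t * a' t / 2 + 2) - 2 * t * Real.exp (a t / 2))
      (nhdsWithin 0 (Ioi 0)) (nhds 0) := by
    have h := htE.mul hbrtend
    simp only [mul_zero] at h
    exact h.congr (fun s => by rw [hsplit s]; ring)
  -- conclusion, pointwise
  intro r hr
  have hgr0 : r * Real.exp ((a r - b r) / 2) * (r * a' r / 2 + 2)
      - 2 * r * Real.exp (a r / 2) ≤ 0 := by
    have hev : ∀ᶠ ε in nhdsWithin (0:ℝ) (Ioi 0),
        (fun t => t * Real.exp ((a t - b t) / 2) * (t * a' t / 2 + 2)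
          - 2 * t * Real.exp (a t / 2)) r
        ≤ (fun t => t * Real.exp ((a t - b t) / 2) * (t * a' t / 2 + 2)
          - 2 * t * Real.exp (a t / 2)) ε := by
      apply Filter.eventually_of_mem (Ioc_mem_nhdsGT_of_mem ⟨le_refl (0:ℝ), hr.1⟩)
      intro ε hε
      exact hanti ⟨hε.1, hε.2.trans hr.2⟩ hr hε.2
    exact ge_of_tendsto hgtend hev
  rw [hsplit r] at hgr0
  have hrE : (0:ℝ) < r * Real.exp (a r / 2) := mul_pos hr.1 (Real.exp_pos _)
  have hkey2 : Real.exp (-(b r) / 2) * (r * a' r / 2 + 2) ≤ 2 := by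
    nlinarith [hgr0, hrE]
  -- 1 - 4c + 3c² ≤ X
  have hXl : 1 - 4 * Real.exp (-(b r) / 2) + 3 * Real.exp (-(b r) / 2) ^ 2
      ≤ q r ^ 2 / r ^ 2 + Λ * r ^ 2 := by
    have h5 := mul_le_mul_of_nonneg_left hkey2 (hcpos r).le
    nlinarith [h5, he2 r hr, hu8 r hr]
  -- sqrt facts
  have hSnn : (0:ℝ) ≤ 1 + 3 * q r ^ 2 / r ^ 2 + 3 * Λ * r ^ 2 := by
    have t1 : (0:ℝ) ≤ q r ^ 2 / r ^ 2 := by positivity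
    have t2 : (0:ℝ) ≤ Λ * r ^ 2 := mul_nonneg hΛ (sq_nonneg r)
    have hparse : 3 * q r ^ 2 / r ^ 2 = 3 * (q r ^ 2 / r ^ 2) := by ring
    linarith [hparse ▸ le_refl (3 * q r ^ 2 / r ^ 2)]
  have hSsq : Real.sqrt (1 + 3 * q r ^ 2 / r ^ 2 + 3 * Λ * r ^ 2) ^ 2
      = 1 + 3 * q r ^ 2 / r ^ 2 + 3 * Λ * r ^ 2 := Real.sq_sqrt hSnn
  have hparse3 : 3 * q r ^ 2 / r ^ 2 = 3 * (q r ^ 2 / r ^ 2) := by ring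
  have hS2 : Real.sqrt (1 + 3 * q r ^ 2 / r ^ 2 + 3 * Λ * r ^ 2) ≤ 2 := by
    rw [show (2:ℝ) = Real.sqrt 4 by
      rw [show (4:ℝ) = 2 ^ 2 by norm_num, Real.sqrt_sq (by norm_num : (0:ℝ) ≤ 2)]]
    apply Real.sqrt_le_sqrt
    have := hcond r hr
    rw [hparse3]
    linarith
  have hS1 : 2 - 3 * Real.exp (-(b r) / 2)
      ≤ Real.sqrt (1 + 3 * q r ^ 2 / r ^ 2 + 3 * Λ * r ^ 2) := by
    have h49 : (2 - 3 * Real.exp (-(b r) / 2)) ^ 2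
        ≤ 1 + 3 * q r ^ 2 / r ^ 2 + 3 * Λ * r ^ 2 := by
      rw [hparse3]
      nlinarith [hXl]
    calc 2 - 3 * Real.exp (-(b r) / 2) ≤ |2 - 3 * Real.exp (-(b r) / 2)| := le_abs_self _
      _ = Real.sqrt ((2 - 3 * Real.exp (-(b r) / 2)) ^ 2) := (Real.sqrt_sq_eq_abs _).symm
      _ ≤ _ := Real.sqrt_le_sqrt h49
  -- mg decomposition
  have hr0 : r ≠ 0 := ne_of_gt hr.1
  have hmatch' := hmatch r hr
  rw [hsq r] at hmatch'
  have hm' : 2 * mFun ρ r / r + fFun q r / r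
      = 1 - Real.exp (-(b r) / 2) ^ 2 - Λ * r ^ 2 / 3 := by
    linarith [hmatch']
  have hmgr : mg ρ q r / r
      = (1 - Real.exp (-(b r) / 2) ^ 2 - Λ * r ^ 2 / 3) / 2 + q r ^ 2 / r ^ 2 / 2 := by
    rw [mg, ← hm']
    field_simp
    ring
  -- final algebra
  have h9 : (2 - Real.sqrt (1 + 3 * q r ^ 2 / r ^ 2 + 3 * Λ * r ^ 2))
      * (2 - Real.sqrt (1 + 3 * q r ^ 2 / r ^ 2 + 3 * Λ * r ^ 2))
      ≤ (3 * Real.exp (-(b r) / 2)) * (3 * Real.exp (-(b r) / 2)) :=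
    mul_self_le_mul_self (by linarith) (by linarith)
  have hparse2 : q r ^ 2 / (3 * r ^ 2) = q r ^ 2 / r ^ 2 / 3 := by ring
  rw [hmgr, hparse2]
  nlinarith [h9, hSsq, hparse3]
end
end

section
/- If (x, y, z₁, z₂) ∈ U and (4 - 3x + y - z₁ - z₂)² ≤ 16(1 - x), then x ≤ (4 - 3z₁ - 3z₂)/9 + (4/9)·√(1 + 3z₁ + 3z₂). -/
noncomputable section

theorem x_bound_of_w_le_sixteen (x y z₁ z₂ : ℝ)
    (hx0 : 0 ≤ x) (hx1 : x < 1) (hy : 0 ≤ y) (hz₁ : 0 ≤ z₁) (hz₂ : 0 ≤ z₂)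
    (hz : z₁ + z₂ ≤ 1)
    (hw : (4 - 3 * x + y - z₁ - z₂) ^ 2 ≤ 16 * (1 - x)) :
    x ≤ (4 - 3 * z₁ - 3 * z₂) / 9 + (4 / 9) * Real.sqrt (1 + 3 * z₁ + 3 * z₂) := by
  set s := z₁ + z₂ with hs
  set r := Real.sqrt (1 + 3 * z₁ + 3 * z₂) with hrdef
  have hr2 : r ^ 2 = 1 + 3 * s := by
    rw [hrdef, Real.sq_sqrt (by nlinarith : (0:ℝ) ≤ 1 + 3 * z₁ + 3 * z₂)]
    ring
  have hr1 : 1 ≤ r := by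
    nlinarith [hr2, Real.sqrt_nonneg (1 + 3 * z₁ + 3 * z₂), hrdef]
  have h0 : 0 ≤ 4 - 3 * x - s := by nlinarith
  have hq : 9 * x ^ 2 + 6 * s * x - 8 * x + s ^ 2 - 8 * s ≤ 0 := by
    nlinarith [mul_nonneg hy h0, sq_nonneg y]
  have hgoal : 9 * x ≤ 4 - 3 * s + 4 * r := by
    nlinarith [hq, hr2, hr1, sq_nonneg (9 * x - (4 - 3 * s) + 4 * r),
      mul_nonneg hx0 (by nlinarith : (0:ℝ) ≤ 4 * r - 4 + 3 * s)]
  nlinarith [hgoal]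
end
end

section
/- Let Λ ∈ ℝ and R > 0. Suppose b : (0,R] → ℝ is C¹, ρ and q are continuous on (0,R] with ρη² and q(η)²/η² integrable near 0, equation (ee1) holds on (0,R], and lim_{r→0⁺} r·(1 - e^{-b(r)}) = 0. Then for all r ∈ (0,R]: e^{-b(r)} = 1 - 2m(r)/r - f(r)/r - Λr²/3, where m(r) = ∫₀ʳ 4πρ(η)η² dη and f(r) = ∫₀ʳ q(η)²/η² dη. -/
open Real Set MeasureTheory

noncomputable section

set_option maxHeartbeats 1000000 in
/-- Solving equation (ee1): the metric coefficient `e^{-b}` is determined by the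
mass `m(r) = ∫₀ʳ 4πρη² dη` and `f(r) = ∫₀ʳ q(η)²/η² dη`. -/
theorem solve_ee1
    (Λ R : ℝ) (hR : 0 < R)
    (b b' ρ q : ℝ → ℝ)
    -- b is C¹ on (0, R]
    (hb : ∀ r ∈ Ioc 0 R, HasDerivAt b (b' r) r)
    (hb' : ContinuousOn b' (Ioc 0 R))
    -- ρ and q are continuous on (0, R]
    (hρc : ContinuousOn ρ (Ioc 0 R))
    (hqc : ContinuousOn q (Ioc 0 R))
    -- ρη² and q(η)²/η² are integrable near 0
    (hmInt : IntegrableOn (fun η => ρ η * η ^ 2) (Ioc 0 R))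
    (hfInt : IntegrableOn (fun η => q η ^ 2 / η ^ 2) (Ioc 0 R))
    -- equation (ee1) on (0, R]
    (ee1 : ∀ r ∈ Ioc 0 R, 8 * π * ρ r + q r ^ 2 / r ^ 4 =
      (1 / r ^ 2) * (1 - Real.exp (-(b r)) + r * b' r * Real.exp (-(b r))) - Λ)
    -- boundary condition at the centre
    (hcentre : Filter.Tendsto (fun r => r * (1 - Real.exp (-(b r))))
      (nhdsWithin 0 (Ioi 0)) (nhds 0)) :
    ∀ r ∈ Ioc 0 R,
      Real.exp (-(b r)) = 1 - 2 * (∫ η in Ioc (0 : ℝ) r, 4 * π * ρ η * η ^ 2) / r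
        - (∫ η in Ioc (0 : ℝ) r, q η ^ 2 / η ^ 2) / r - Λ * r ^ 2 / 3 := by
  set g : ℝ → ℝ := fun x => x * (1 - Real.exp (-(b x))) with hg
  set h : ℝ → ℝ := fun η => 8 * π * ρ η * η ^ 2 + q η ^ 2 / η ^ 2 + Λ * η ^ 2 with hh
  -- integrability of h on Ioc 0 R
  have h8 : IntegrableOn (fun η => 8 * π * ρ η * η ^ 2) (Ioc 0 R) := by
    have e : (fun η : ℝ => 8 * π * ρ η * η ^ 2) = fun η => 8 * π * (ρ η * η ^ 2) := by
      funext η; ring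
    rw [e]; exact hmInt.const_mul _
  have hInt : IntegrableOn h (Ioc 0 R) :=
    (h8.add hfInt).add (Continuous.integrableOn_Ioc (by continuity))
  -- b continuous on Ioc 0 R
  have hbc : ContinuousOn b (Ioc 0 R) := fun x hx => (hb x hx).continuousAt.continuousWithinAt
  -- derivative of g equals h on Ioc 0 R
  have hgd : ∀ x ∈ Ioc 0 R, HasDerivAt g (h x) x := by
    intro x hx
    have hx0 : x ≠ 0 := ne_of_gt hx.1
    have hd : HasDerivAt g (1 - Real.exp (-(b x)) + x * (b' x * Real.exp (-(b x)))) x := by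
      have h1 : HasDerivAt (fun y : ℝ => 1 - Real.exp (-(b y))) (b' x * Real.exp (-(b x))) x := by
        have := ((hb x hx).neg.exp)
        have h2 : HasDerivAt (fun y => Real.exp (-(b y))) (-b' x * Real.exp (-(b x))) x := by
          simpa [mul_comm] using this
        have := h2.const_sub 1
        exact this.congr_deriv (by ring)
      simpa using (hasDerivAt_id x).fun_mul h1
    convert hd using 1
    have e1 := ee1 x hx
    have hx2 : (x:ℝ)^2 ≠ 0 := pow_ne_zero _ hx0
    have hx4 : (x:ℝ)^4 ≠ 0 := pow_ne_zero _ hx0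
    have e2 : h x = x ^ 2 * ((8 * π * ρ x + q x ^ 2 / x ^ 4) + Λ) := by
      simp only [hh]; field_simp
    rw [e2, e1]
    field_simp
    ring
  have hg'c : ContinuousOn h (Ioc 0 R) := by
    apply ContinuousOn.add
    apply ContinuousOn.add
    · exact (continuousOn_const.mul hρc).mul (continuousOn_pow 2)
    · exact (hqc.pow 2).div (continuousOn_pow 2)
        (fun x hx => pow_ne_zero _ (ne_of_gt hx.1))
    · exact continuousOn_const.mul (continuousOn_pow 2)
  intro r hr
  have hr0 : 0 < r := hr.1
  have hrR : r ≤ R := hr.2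
  -- FTC: for 0 < s ≤ r, g r - g s = ∫ Ioc s r h
  have key : ∀ s, 0 < s → s ≤ r → g r - g s = ∫ η in Ioc s r, h η := by
    intro s hs hsr
    have hsub : Icc s r ⊆ Ioc 0 R := fun x hx => ⟨lt_of_lt_of_le hs hx.1, le_trans hx.2 hrR⟩
    have huIcc : uIcc s r = Icc s r := uIcc_of_le hsr
    have hie : IntervalIntegrable h volume s r := by
      apply ContinuousOn.intervalIntegrable
      rw [huIcc]; exact hg'c.mono hsub
    have := intervalIntegral.integral_eq_sub_of_hasDerivAt
      (f := g) (f' := h) (a := s) (b := r)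
      (fun x hx => hgd x (hsub (huIcc ▸ hx))) hie
    rw [intervalIntegral.integral_of_le hsr] at this
    linarith [this]
  -- the primitive F
  set F : ℝ → ℝ := fun s => ∫ η in Ioc 0 s, h η with hF
  have hFcont : ContinuousOn F (Icc 0 R) := by
    apply intervalIntegral.continuousOn_primitive
    rwa [integrableOn_Icc_iff_integrableOn_Ioc]
  have hF0 : F 0 = 0 := by simp [hF]
  have hFsplit : ∀ s, 0 < s → s ≤ r → (∫ η in Ioc s r, h η) = F r - F s := by
    intro s hs hsr
    have h1 : IntegrableOn h (Ioc 0 s) := hInt.mono_set (Ioc_subset_Ioc le_rfl (hsr.trans hrR))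
    have h2 : IntegrableOn h (Ioc s r) :=
      hInt.mono_set (Ioc_subset_Ioc hs.le hrR)
    have : F s + ∫ η in Ioc s r, h η = F r := by
      rw [hF]
      rw [← MeasureTheory.setIntegral_union (by
        simp [Set.disjoint_left]; intro a _ h _; linarith) measurableSet_Ioc h1 h2]
      rw [Ioc_union_Ioc_eq_Ioc hs.le hsr]
    linarith
  -- limit of F at 0 from the right
  have hFlim : Filter.Tendsto F (nhdsWithin 0 (Ioi 0)) (nhds 0) := by
    have h1 : Filter.Tendsto F (nhdsWithin 0 (Icc 0 R)) (nhds 0) := by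
      have := (hFcont 0 ⟨le_rfl, hR.le⟩)
      rw [ContinuousWithinAt, hF0] at this
      exact this
    have h2 : nhdsWithin (0:ℝ) (Ioi 0) = nhdsWithin 0 (Ioc 0 R) :=
      (nhdsWithin_Ioc_eq_nhdsGT hR).symm
    rw [h2]
    exact h1.mono_left (nhdsWithin_mono _ Ioc_subset_Icc_self)
  -- g r = F r
  have hgr : g r = F r := by
    have ev : ∀ᶠ s in nhdsWithin (0:ℝ) (Ioi 0),
        g s = g r - F r + F s := by
      filter_upwards [Ioo_mem_nhdsGT_of_mem ⟨le_rfl, hr0⟩] with s hs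
      have := key s hs.1 hs.2.le
      rw [hFsplit s hs.1 hs.2.le] at this
      linarith
    have t1 : Filter.Tendsto (fun s => g r - F r + F s) (nhdsWithin 0 (Ioi 0))
        (nhds (g r - F r + 0)) := (tendsto_const_nhds.add hFlim)
    have t2 : Filter.Tendsto g (nhdsWithin (0:ℝ) (Ioi 0)) (nhds (g r - F r + 0)) :=
      t1.congr' (ev.mono fun s hs => hs.symm)
    have := tendsto_nhds_unique t2 hcentre
    linarith
  -- evaluate F r
  have hm1 : IntegrableOn (fun η => 8 * π * ρ η * η ^ 2) (Ioc 0 r) :=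
    h8.mono_set (Ioc_subset_Ioc le_rfl hrR)
  have hf1 : IntegrableOn (fun η => q η ^ 2 / η ^ 2) (Ioc 0 r) :=
    hfInt.mono_set (Ioc_subset_Ioc le_rfl hrR)
  have hΛ1 : IntegrableOn (fun η : ℝ => Λ * η ^ 2) (Ioc 0 r) :=
    Continuous.integrableOn_Ioc (by continuity)
  have hFr : F r = 2 * (∫ η in Ioc (0:ℝ) r, 4 * π * ρ η * η ^ 2)
      + (∫ η in Ioc (0:ℝ) r, q η ^ 2 / η ^ 2) + Λ * r ^ 3 / 3 := by
    have step : F r = (∫ η in Ioc (0:ℝ) r, 8 * π * ρ η * η ^ 2)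
        + (∫ η in Ioc (0:ℝ) r, q η ^ 2 / η ^ 2) + ∫ η in Ioc (0:ℝ) r, Λ * η ^ 2 := by
      calc F r = ∫ η in Ioc (0:ℝ) r,
            ((8 * π * ρ η * η ^ 2 + q η ^ 2 / η ^ 2) + Λ * η ^ 2) := rfl
        _ = (∫ η in Ioc (0:ℝ) r, (8 * π * ρ η * η ^ 2 + q η ^ 2 / η ^ 2))
            + ∫ η in Ioc (0:ℝ) r, Λ * η ^ 2 :=
          MeasureTheory.integral_add (hm1.add hf1) hΛ1
        _ = _ := by rw [MeasureTheory.integral_add hm1 hf1]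
    rw [step]
    have e1 : (∫ η in Ioc (0:ℝ) r, 8 * π * ρ η * η ^ 2)
        = 2 * ∫ η in Ioc (0:ℝ) r, 4 * π * ρ η * η ^ 2 := by
      rw [← MeasureTheory.integral_const_mul 2]
      exact setIntegral_congr_fun measurableSet_Ioc (fun x _ => by ring)
    have e2 : (∫ η in Ioc (0:ℝ) r, Λ * η ^ 2) = Λ * r ^ 3 / 3 := by
      rw [MeasureTheory.integral_const_mul, ← intervalIntegral.integral_of_le hr0.le]
      rw [integral_pow]
      ring
    rw [e1, e2]
  -- final algebra
  have hgval : r * (1 - Real.exp (-(b r)))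
      = 2 * (∫ η in Ioc (0:ℝ) r, 4 * π * ρ η * η ^ 2)
      + (∫ η in Ioc (0:ℝ) r, q η ^ 2 / η ^ 2) + Λ * r ^ 3 / 3 := by
    rw [← hFr, ← hgr]
  have hrne : r ≠ 0 := ne_of_gt hr0
  set M := ∫ η in Ioc (0:ℝ) r, 4 * π * ρ η * η ^ 2 with hM
  set fq := ∫ η in Ioc (0:ℝ) r, q η ^ 2 / η ^ 2 with hfq
  have h2 : (1 : ℝ) - Real.exp (-(b r)) = (2 * M + fq + Λ * r ^ 3 / 3) / r := by
    rw [eq_div_iff hrne]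
    linear_combination hgval
  have h3 : Real.exp (-(b r)) = 1 - (2 * M + fq + Λ * r ^ 3 / 3) / r := by linarith
  rw [h3]
  field_simp
  ring
end
end

section
/- Let M, Q, R, Λ be real numbers with R > 0, Λ ≥ 0, Q²/R² + ΛR² ≤ 1. If 1 - 2M/R + Q²/R² - ΛR²/3 = 0 and M/R ≤ 2/9 + Q²/(3R²) - ΛR²/3 + (2/9)·√(1 + 3Q²/R² + 3ΛR²), then Q²/R² + ΛR² = 1. -/
noncomputable section

theorem extreme_horizon_case (M Q R Λ : ℝ)
    (hR : 0 < R) (hΛ : 0 ≤ Λ)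
    (hcond : Q ^ 2 / R ^ 2 + Λ * R ^ 2 ≤ 1)
    (hΩ : 1 - 2 * M / R + Q ^ 2 / R ^ 2 - Λ * R ^ 2 / 3 = 0)
    (hbound : M / R ≤ 2 / 9 + Q ^ 2 / (3 * R ^ 2) - Λ * R ^ 2 / 3
      + (2 / 9) * Real.sqrt (1 + 3 * Q ^ 2 / R ^ 2 + 3 * Λ * R ^ 2)) :
    Q ^ 2 / R ^ 2 + Λ * R ^ 2 = 1 := by
  have hR2 : (0:ℝ) < R ^ 2 := by positivity
  have hq : 0 ≤ Q ^ 2 / R ^ 2 := by positivity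
  have hl : 0 ≤ Λ * R ^ 2 := by positivity
  have hQR : Q ^ 2 / (3 * R ^ 2) = (Q ^ 2 / R ^ 2) / 3 := by
    rw [mul_comm, ← div_div]
  set s := Real.sqrt (1 + 3 * Q ^ 2 / R ^ 2 + 3 * Λ * R ^ 2) with hsdef
  have hx : 0 ≤ 1 + 3 * Q ^ 2 / R ^ 2 + 3 * Λ * R ^ 2 := by
    have : 3 * Q ^ 2 / R ^ 2 = 3 * (Q ^ 2 / R ^ 2) := by ring
    nlinarith
  have hs2 : s ^ 2 = 1 + 3 * Q ^ 2 / R ^ 2 + 3 * Λ * R ^ 2 := Real.sq_sqrt hx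
  have h3 : 3 * Q ^ 2 / R ^ 2 = 3 * (Q ^ 2 / R ^ 2) := by ring
  have hM : 2 * M / R = 2 * (M / R) := by ring
  have h1 : (s - 2) ^ 2 ≤ 0 := by nlinarith [hΩ, hM, hQR, hbound, hs2]
  have h2 : s = 2 := by nlinarith [sq_nonneg (s - 2)]
  rw [h2] at hs2
  nlinarith
end
end
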